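/- Let τ ∈ [0, 3/4]. Let S₁, S₂, X₁, X₂ be mutually independent ℤ₄-valued random variables with S₁, S₂ uniformly distributed, P(X_j = 0) = 1−τ and P(X_j = x) = τ/3 for x ∈ {1,2,3}, j = 1,2. Set V_j = X_j ⊞ S_j and Y = V₁ ⊞ V₂, where ⊞ is addition mod 4, and let ⊕ denote the operation on {0,1,2,3} given by bitwise XOR of the two-bit binary representations (i.e., the addition of ℤ₂×ℤ₂ under v ↦ (v mod 2, ⌊v/2⌋)). Then: (i) H(V_j|S_j) = −τ·log₂(τ/3) − (1−τ)·log₂(1−τ) for j = 1,2; (ii) V₁ and V₂ are independent and each uniform on ℤ₄; (iii) H(V₁⊕V₂ | Y) = 1/2; and consequently min{H(V₁|S₁), H(V₂|S₂)} − H(V₁⊕V₂|Y) = −τ·log₂(τ/3) − (1−τ)·log₂(1−τ) − 1/2. -/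

import Mathlib

open scoped BigOperators Classical

noncomputable section

namespace Stmt18

/-- Shannon entropy (base 2) of a pmf on a finite alphabet. -/
def ent {α : Type*} [Fintype α] (p : α → ℝ) : ℝ := -∑ a, p a * Real.logb 2 (p a)

/-- Conditional entropy `H(A|B)` of a joint pmf on `α × β` (first given second). -/
def condEnt {α β : Type*} [Fintype α] [Fintype β] (p : α × β → ℝ) : ℝ :=
  ent p - ent (fun b => ∑ a, p (a, b))

/-- Bitwise XOR on `{0,1,2,3}` via the two-bit binary representation, i.e. the addition
of `ℤ₂ × ℤ₂` under `v ↦ (v mod 2, ⌊v/2⌋)`. -/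
def xor4 (a b : ZMod 4) : ZMod 4 := ((a.val ^^^ b.val : ℕ) : ZMod 4)

/-- Sample space: `(S₁, S₂, X₁, X₂)`, each `ℤ₄`-valued. -/
abbrev Ω : Type := ZMod 4 × ZMod 4 × ZMod 4 × ZMod 4

/-- Joint pmf of mutually independent `(S₁,S₂,X₁,X₂)` with `S₁,S₂` uniform,
`P(X_j = 0) = 1 − τ` and `P(X_j = x) = τ/3` for `x ≠ 0`. -/
def μ (τ : ℝ) (ω : Ω) : ℝ :=
  (1 / 4) * (1 / 4) * (if ω.2.2.1 = 0 then 1 - τ else τ / 3) *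
    (if ω.2.2.2 = 0 then 1 - τ else τ / 3)

/-- Pushforward pmf of a random variable `f` on `Ω` under `μ τ`. -/
def push (τ : ℝ) {α : Type*} [Fintype α] (f : Ω → α) : α → ℝ :=
  fun a => ∑ ω : Ω, if f ω = a then μ τ ω else 0

/-- `V_j = X_j ⊞ S_j` (mod-4 addition). -/
def V1 (ω : Ω) : ZMod 4 := ω.2.2.1 + ω.1
def V2 (ω : Ω) : ZMod 4 := ω.2.2.2 + ω.2.1

/-- `Y = V₁ ⊞ V₂` (mod-4 addition). -/
def Yout (ω : Ω) : ZMod 4 := V1 ω + V2 ω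

lemma push_eq (τ : ℝ) {α : Type*} [Fintype α] [DecidableEq α] (f : Ω → α) (a : α) :
    push τ f a = ∑ ω : Ω, if f ω = a then μ τ ω else 0 := by
  unfold push
  apply Finset.sum_congr rfl
  intro ω _
  by_cases h : f ω = a <;> simp [h]

lemma sum4 (f : ZMod 4 → ℝ) : ∑ x : ZMod 4, f x = f 0 + f 1 + f 2 + f 3 := by
  show ∑ x : Fin 4, f x = _
  exact Fin.sum_univ_four f

lemma sum_p (τ : ℝ) : ∑ x : ZMod 4, (if x = 0 then 1 - τ else τ / 3) = 1 := by
  rw [sum4]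
  simp (config := { decide := true }) only [ite_true, ite_false]
  ring

lemma sum_p_shift (τ : ℝ) (s : ZMod 4) :
    ∑ v : ZMod 4, (if v - s = 0 then 1 - τ else τ / 3) = 1 := by
  exact ((Equiv.subRight s).sum_comp (fun x => if x = 0 then 1 - τ else τ / 3)).trans (sum_p τ)

lemma sum_p_shift' (τ : ℝ) (v : ZMod 4) :
    ∑ s : ZMod 4, (if v - s = 0 then 1 - τ else τ / 3) = 1 := by
  exact ((Equiv.subLeft v).sum_comp (fun x => if x = 0 then 1 - τ else τ / 3)).trans (sum_p τ)

lemma factor (g1 g2 g3 g4 : ZMod 4 → ℝ) :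
    ∑ ω : Ω, g1 ω.1 * g2 ω.2.1 * g3 ω.2.2.1 * g4 ω.2.2.2 =
    (∑ a, g1 a) * (∑ a, g2 a) * (∑ a, g3 a) * (∑ a, g4 a) := by
  simp only [Fintype.sum_prod_type, ← Finset.sum_mul, ← Finset.mul_sum]

lemma factor2 (F G : ZMod 4 × ZMod 4 → ℝ) :
    ∑ ω : Ω, F (ω.1, ω.2.2.1) * G (ω.2.1, ω.2.2.2) = (∑ q, F q) * (∑ q, G q) := by
  have h1 : ∑ ω : Ω, F (ω.1, ω.2.2.1) * G (ω.2.1, ω.2.2.2)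
      = ∑ q : (ZMod 4 × ZMod 4) × (ZMod 4 × ZMod 4), F q.1 * G q.2 :=
    Fintype.sum_equiv
      ⟨fun ω : Ω => ((ω.1, ω.2.2.1), (ω.2.1, ω.2.2.2)),
       fun q => (q.1.1, q.2.1, q.1.2, q.2.2), fun _ => rfl, fun _ => rfl⟩ _ _ (fun _ => rfl)
  rw [h1, Fintype.sum_prod_type]
  simp only [← Finset.sum_mul, ← Finset.mul_sum]


lemma hV1S1 (τ : ℝ) (v s : ZMod 4) :
    push τ (fun ω => (V1 ω, ω.1)) (v, s) = 1 / 4 * (if v - s = 0 then 1 - τ else τ / 3) := by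
  have key : ∀ ω : Ω, (if (V1 ω, ω.1) = (v, s) then μ τ ω else 0)
      = (fun a => if a = s then (1:ℝ)/4 else 0) ω.1 * (fun _ => (1:ℝ)/4) ω.2.1 *
        (fun x => if x = v - s then (if x = 0 then 1 - τ else τ / 3) else 0) ω.2.2.1 *
        (fun x => if x = 0 then 1 - τ else τ / 3) ω.2.2.2 := by
    intro ω
    simp only
    by_cases h1 : ω.1 = s
    · by_cases h2 : ω.2.2.1 = v - s
      · have hc : (V1 ω, ω.1) = (v, s) := by
          simp only [Prod.mk.injEq, V1, h1, h2, and_true]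
          try ring
        rw [if_pos hc, if_pos h1, if_pos h2, μ]
        try ring
      · have hc : ¬ ((V1 ω, ω.1) = (v, s)) := by
          simp only [Prod.mk.injEq, V1, h1, not_and]
          intro h
          exact absurd (by rw [← h]; ring) h2
        rw [if_neg hc, if_neg h2]
        ring
    · have hc : ¬ ((V1 ω, ω.1) = (v, s)) := by
        simp only [Prod.mk.injEq, not_and]
        intro _
        exact h1
      rw [if_neg hc, if_neg h1]
      ring
  rw [push_eq]
  simp only [key]
  rw [factor (fun a => if a = s then (1:ℝ)/4 else 0) (fun _ => (1:ℝ)/4)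
      (fun x => if x = v - s then (if x = 0 then 1 - τ else τ / 3) else 0)
      (fun x => if x = 0 then 1 - τ else τ / 3)]
  rw [Finset.sum_ite_eq' Finset.univ s (fun _ => (1:ℝ)/4),
      Finset.sum_ite_eq' Finset.univ (v - s) (fun x => if x = 0 then 1 - τ else τ / 3),
      sum_p]
  simp [Finset.card_univ, ZMod.card]
  try ring

lemma hV2S2 (τ : ℝ) (v s : ZMod 4) :
    push τ (fun ω => (V2 ω, ω.2.1)) (v, s) = 1 / 4 * (if v - s = 0 then 1 - τ else τ / 3) := by
  have key : ∀ ω : Ω, (if (V2 ω, ω.2.1) = (v, s) then μ τ ω else 0)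
      = (fun _ => (1:ℝ)/4) ω.1 * (fun a => if a = s then (1:ℝ)/4 else 0) ω.2.1 *
        (fun x => if x = 0 then 1 - τ else τ / 3) ω.2.2.1 *
        (fun x => if x = v - s then (if x = 0 then 1 - τ else τ / 3) else 0) ω.2.2.2 := by
    intro ω
    simp only
    by_cases h1 : ω.2.1 = s
    · by_cases h2 : ω.2.2.2 = v - s
      · have hc : (V2 ω, ω.2.1) = (v, s) := by
          simp only [Prod.mk.injEq, V2, h1, h2, and_true]
          try ring
        rw [if_pos hc, if_pos h1, if_pos h2, μ]
        try ring
      · have hc : ¬ ((V2 ω, ω.2.1) = (v, s)) := by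
          simp only [Prod.mk.injEq, V2, h1, not_and]
          intro h
          exact absurd (by rw [← h]; ring) h2
        rw [if_neg hc, if_neg h2]
        ring
    · have hc : ¬ ((V2 ω, ω.2.1) = (v, s)) := by
        simp only [Prod.mk.injEq, not_and]
        intro _
        exact h1
      rw [if_neg hc, if_neg h1]
      ring
  rw [push_eq]
  simp only [key]
  rw [factor (fun _ => (1:ℝ)/4) (fun a => if a = s then (1:ℝ)/4 else 0)
      (fun x => if x = 0 then 1 - τ else τ / 3)
      (fun x => if x = v - s then (if x = 0 then 1 - τ else τ / 3) else 0)]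
  rw [Finset.sum_ite_eq' Finset.univ s (fun _ => (1:ℝ)/4),
      Finset.sum_ite_eq' Finset.univ (v - s) (fun x => if x = 0 then 1 - τ else τ / 3),
      sum_p]
  simp [Finset.card_univ, ZMod.card]
  try ring

lemma marg1 (τ : ℝ) (f g : Ω → ZMod 4) (v : ZMod 4) :
    push τ f v = ∑ s : ZMod 4, push τ (fun ω => (f ω, g ω)) (v, s) := by
  rw [push_eq]
  simp only [fun s => push_eq τ (fun ω => (f ω, g ω)) (v, s)]
  rw [Finset.sum_comm]
  apply Finset.sum_congr rfl
  intro ω _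
  by_cases h : f ω = v
  · simp [Prod.ext_iff, h, Finset.sum_ite_eq]
  · simp [Prod.ext_iff, h]

lemma hV1 (τ : ℝ) (v : ZMod 4) : push τ V1 v = 1 / 4 := by
  have : push τ V1 v = push τ (fun ω => V1 ω) v := rfl
  rw [this, marg1 τ (fun ω => V1 ω) (fun ω => ω.1) v]
  simp_rw [hV1S1]
  rw [← Finset.mul_sum, sum_p_shift']
  norm_num

lemma hV2 (τ : ℝ) (v : ZMod 4) : push τ V2 v = 1 / 4 := by
  have : push τ V2 v = push τ (fun ω => V2 ω) v := rfl
  rw [this, marg1 τ (fun ω => V2 ω) (fun ω => ω.2.1) v]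
  simp_rw [hV2S2]
  rw [← Finset.mul_sum, sum_p_shift']
  norm_num

lemma blocksum (τ : ℝ) (a : ZMod 4) :
    ∑ q : ZMod 4 × ZMod 4,
      (if q.2 = a - q.1 then (1:ℝ)/4 * (if q.2 = 0 then 1 - τ else τ / 3) else 0) = 1 / 4 := by
  rw [Fintype.sum_prod_type]
  have : ∀ s : ZMod 4, (∑ x : ZMod 4,
      (if x = a - s then (1:ℝ)/4 * (if x = 0 then 1 - τ else τ / 3) else 0))
      = (1:ℝ)/4 * (if a - s = 0 then 1 - τ else τ / 3) := by
    intro s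
    rw [Finset.sum_ite_eq' Finset.univ (a - s)
      (fun x => (1:ℝ)/4 * (if x = 0 then 1 - τ else τ / 3))]
    simp
  simp_rw [this]
  rw [← Finset.mul_sum, sum_p_shift']
  norm_num

lemma hJ (τ : ℝ) (a b : ZMod 4) :
    push τ (fun ω => (V1 ω, V2 ω)) (a, b) = 1 / 16 := by
  have key : ∀ ω : Ω, (if (V1 ω, V2 ω) = (a, b) then μ τ ω else 0)
      = (fun q : ZMod 4 × ZMod 4 =>
          if q.2 = a - q.1 then (1:ℝ)/4 * (if q.2 = 0 then 1 - τ else τ / 3) else 0) (ω.1, ω.2.2.1) *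
        (fun q : ZMod 4 × ZMod 4 =>
          if q.2 = b - q.1 then (1:ℝ)/4 * (if q.2 = 0 then 1 - τ else τ / 3) else 0) (ω.2.1, ω.2.2.2) := by
    intro ω
    simp only
    by_cases h1 : ω.2.2.1 = a - ω.1
    · by_cases h2 : ω.2.2.2 = b - ω.2.1
      · have hc : (V1 ω, V2 ω) = (a, b) := by
          simp only [Prod.mk.injEq, V1, V2, h1, h2]
          constructor <;> ring
        rw [if_pos hc, if_pos h1, if_pos h2, μ]
        try ring
      · have hc : ¬ ((V1 ω, V2 ω) = (a, b)) := by
          simp only [Prod.mk.injEq, V1, V2, not_and]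
          intro _ h
          exact absurd (by rw [← h]; ring) h2
        rw [if_neg hc, if_neg h2]
        ring
    · have hc : ¬ ((V1 ω, V2 ω) = (a, b)) := by
        simp only [Prod.mk.injEq, V1, V2, not_and]
        intro h
        exact absurd (show ω.2.2.1 = a - ω.1 from by rw [← h]; ring) h1
      rw [if_neg hc, if_neg h1]
      ring
  rw [push_eq]
  simp only [key]
  rw [factor2 (fun q : ZMod 4 × ZMod 4 =>
        if q.2 = a - q.1 then (1:ℝ)/4 * (if q.2 = 0 then 1 - τ else τ / 3) else 0)
      (fun q : ZMod 4 × ZMod 4 =>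
        if q.2 = b - q.1 then (1:ℝ)/4 * (if q.2 = 0 then 1 - τ else τ / 3) else 0),
      blocksum, blocksum]
  norm_num


lemma push_comp (τ : ℝ) {α : Type*} [Fintype α] [DecidableEq α]
    (g : ZMod 4 × ZMod 4 → α) (a : α) :
    push τ (fun ω => g (V1 ω, V2 ω)) a
      = ∑ v : ZMod 4 × ZMod 4, (if g v = a then (1:ℝ)/16 else 0) := by
  rw [push_eq]
  have swap : ∀ ω : Ω, (if g (V1 ω, V2 ω) = a then μ τ ω else 0)
      = ∑ v : ZMod 4 × ZMod 4,
          (if (V1 ω, V2 ω) = v then (if g v = a then μ τ ω else 0) else 0) := by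
    intro ω
    rw [Finset.sum_ite_eq Finset.univ (V1 ω, V2 ω)
      (fun v => if g v = a then μ τ ω else 0)]
    simp
  simp_rw [swap]
  rw [Finset.sum_comm]
  apply Finset.sum_congr rfl
  intro v _
  by_cases h : g v = a
  · simp only [h, if_true]
    have : (∑ ω : Ω, if (V1 ω, V2 ω) = v then μ τ ω else 0)
        = push τ (fun ω => (V1 ω, V2 ω)) v := (push_eq τ _ v).symm
    rw [this]
    obtain ⟨v1, v2⟩ := v
    exact hJ τ v1 v2
  · simp [h]

lemma marg2 (τ : ℝ) (f g : Ω → ZMod 4) (y : ZMod 4) :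
    push τ g y = ∑ w : ZMod 4, push τ (fun ω => (f ω, g ω)) (w, y) := by
  rw [push_eq]
  simp only [fun w => push_eq τ (fun ω => (f ω, g ω)) (w, y)]
  rw [Finset.sum_comm]
  apply Finset.sum_congr rfl
  intro ω _
  by_cases h : g ω = y
  · simp [Prod.ext_iff, h, Finset.sum_ite_eq]
  · simp [Prod.ext_iff, h]

lemma hYout (τ : ℝ) (y : ZMod 4) : push τ Yout y = 1 / 4 := by
  have h := push_comp τ (fun v : ZMod 4 × ZMod 4 => v.1 + v.2) y
  have h0 : push τ Yout y
      = push τ (fun ω => (fun v : ZMod 4 × ZMod 4 => v.1 + v.2) (V1 ω, V2 ω)) y := rfl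
  rw [h0, h, Fintype.sum_prod_type]
  have inner : ∀ v1 : ZMod 4,
      (∑ v2 : ZMod 4, if v1 + v2 = y then (1:ℝ)/16 else 0) = 1/16 := by
    intro v1
    have step : ∀ v2 : ZMod 4, (if v1 + v2 = y then (1:ℝ)/16 else 0)
        = (if v2 = y - v1 then (1:ℝ)/16 else 0) := by
      intro v2
      by_cases h : v2 = y - v1
      · rw [if_pos h, if_pos (by rw [h]; ring)]
      · rw [if_neg h, if_neg (fun hc => h (by rw [← hc]; ring))]
    simp_rw [step]
    rw [Finset.sum_ite_eq' Finset.univ (y - v1) (fun _ => (1:ℝ)/16)]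
    simp
  simp_rw [inner]
  rw [sum4]
  norm_num

lemma l2 : Real.logb 2 2 = 1 := Real.logb_self_eq_one (by norm_num)
lemma l4 : Real.logb 2 4 = 2 := by
  rw [show (4:ℝ) = 2^(2:ℕ) by norm_num, Real.logb_pow, l2]; norm_num
lemma l8 : Real.logb 2 8 = 3 := by
  rw [show (8:ℝ) = 2^(3:ℕ) by norm_num, Real.logb_pow, l2]; norm_num
lemma l14 : Real.logb 2 ((1:ℝ)/4) = -2 := by rw [one_div, Real.logb_inv, l4]
lemma l18 : Real.logb 2 ((1:ℝ)/8) = -3 := by rw [one_div, Real.logb_inv, l8]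
lemma l14' : Real.logb 2 ((4:ℝ)⁻¹) = -2 := by rw [Real.logb_inv, l4]
lemma l18' : Real.logb 2 ((8:ℝ)⁻¹) = -3 := by rw [Real.logb_inv, l8]

lemma hentm : ent (fun _ : ZMod 4 => (1/4:ℝ)) = 2 := by
  unfold ent
  rw [sum4, l14]
  norm_num

lemma condEnt1 (τ : ℝ) (h0 : 0 ≤ τ) (h1 : τ ≤ 3 / 4) :
    condEnt (push τ (fun ω => (V1 ω, ω.1))) =
      -(τ * Real.logb 2 (τ / 3)) - (1 - τ) * Real.logb 2 (1 - τ) := by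
  have hBpos : (0:ℝ) < 1 - τ := by linarith
  have hA : (1:ℝ)/4 * (1 - τ) * Real.logb 2 (1/4 * (1 - τ))
      = 1/4 * ((1 - τ) * Real.logb 2 (1 - τ) - 2 * (1 - τ)) := by
    rw [show (1:ℝ)/4 * (1 - τ) = (1 - τ)/4 by ring,
        Real.logb_div hBpos.ne' (by norm_num : (4:ℝ) ≠ 0), l4]
    ring
  have hB : (1:ℝ)/4 * (τ/3) * Real.logb 2 (1/4 * (τ/3))
      = 1/12 * (τ * Real.logb 2 (τ/3) - 2 * τ) := by
    rcases eq_or_lt_of_le h0 with h|h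
    · rw [← h]; norm_num
    · rw [show (1:ℝ)/4 * (τ/3) = (τ/3)/4 by ring,
          Real.logb_div (by positivity) (by norm_num : (4:ℝ) ≠ 0), l4]
      ring
  unfold condEnt
  have hmarg : (fun s : ZMod 4 => ∑ v : ZMod 4, push τ (fun ω => (V1 ω, ω.1)) (v, s))
      = fun _ => (1/4:ℝ) := by
    funext s
    simp_rw [hV1S1]
    rw [← Finset.mul_sum, sum_p_shift]
    norm_num
  rw [hmarg, hentm]
  unfold ent
  rw [Fintype.sum_prod_type]
  simp only [sum4]
  simp (config := { decide := true }) only [hV1S1, ite_true, ite_false]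
  simp only [hA, hB]
  ring


lemma condEnt2 (τ : ℝ) (h0 : 0 ≤ τ) (h1 : τ ≤ 3 / 4) :
    condEnt (push τ (fun ω => (V2 ω, ω.2.1))) =
      -(τ * Real.logb 2 (τ / 3)) - (1 - τ) * Real.logb 2 (1 - τ) := by
  have hBpos : (0:ℝ) < 1 - τ := by linarith
  have hA : (1:ℝ)/4 * (1 - τ) * Real.logb 2 (1/4 * (1 - τ))
      = 1/4 * ((1 - τ) * Real.logb 2 (1 - τ) - 2 * (1 - τ)) := by
    rw [show (1:ℝ)/4 * (1 - τ) = (1 - τ)/4 by ring,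
        Real.logb_div hBpos.ne' (by norm_num : (4:ℝ) ≠ 0), l4]
    ring
  have hB : (1:ℝ)/4 * (τ/3) * Real.logb 2 (1/4 * (τ/3))
      = 1/12 * (τ * Real.logb 2 (τ/3) - 2 * τ) := by
    rcases eq_or_lt_of_le h0 with h|h
    · rw [← h]; norm_num
    · rw [show (1:ℝ)/4 * (τ/3) = (τ/3)/4 by ring,
          Real.logb_div (by positivity) (by norm_num : (4:ℝ) ≠ 0), l4]
      ring
  unfold condEnt
  have hmarg : (fun s : ZMod 4 => ∑ v : ZMod 4, push τ (fun ω => (V2 ω, ω.2.1)) (v, s))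
      = fun _ => (1/4:ℝ) := by
    funext s
    simp_rw [hV2S2]
    rw [← Finset.mul_sum, sum_p_shift]
    norm_num
  rw [hmarg, hentm]
  unfold ent
  rw [Fintype.sum_prod_type]
  simp only [sum4]
  simp (config := { decide := true }) only [hV2S2, ite_true, ite_false]
  simp only [hA, hB]
  ring

lemma hWY (τ : ℝ) (q : ZMod 4 × ZMod 4) :
    push τ (fun ω => (xor4 (V1 ω) (V2 ω), Yout ω)) q
      = ∑ v : ZMod 4 × ZMod 4, (if (xor4 v.1 v.2, v.1 + v.2) = q then (1:ℝ)/16 else 0) :=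
  push_comp τ (fun v : ZMod 4 × ZMod 4 => (xor4 v.1 v.2, v.1 + v.2)) q

set_option maxHeartbeats 2000000 in
lemma condEntXY (τ : ℝ) :
    condEnt (push τ (fun ω => (xor4 (V1 ω) (V2 ω), Yout ω))) = 1 / 2 := by
  unfold condEnt
  have hmarg : (fun y : ZMod 4 => ∑ w : ZMod 4,
      push τ (fun ω => (xor4 (V1 ω) (V2 ω), Yout ω)) (w, y)) = fun _ => (1/4:ℝ) := by
    funext y
    exact ((marg2 τ (fun ω => xor4 (V1 ω) (V2 ω)) Yout y).symm).trans (hYout τ y)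
  rw [hmarg, hentm]
  unfold ent
  rw [Fintype.sum_prod_type]
  simp only [sum4]
  simp only [hWY]
  simp (config := { decide := true }) only [Fintype.sum_prod_type, sum4, Prod.mk.injEq,
    ite_true, ite_false, and_true, true_and, and_false, false_and]
  norm_num [l18, l14, l18', l14']


/-- For the quaternary doubly dirty MAC test channel:
(i) `H(V_j|S_j) = −τ·log₂(τ/3) − (1−τ)·log₂(1−τ)`;
(ii) `V₁, V₂` are independent and each uniform on `ℤ₄`;
(iii) `H(V₁⊕V₂|Y) = 1/2` (⊕ the bitwise XOR);
and consequently `min{H(V₁|S₁),H(V₂|S₂)} − H(V₁⊕V₂|Y)` equals the displayed value. -/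
theorem qddmac_field_sum_rate (τ : ℝ) (h0 : 0 ≤ τ) (h1 : τ ≤ 3 / 4) :
    condEnt (push τ (fun ω => (V1 ω, ω.1))) =
      -(τ * Real.logb 2 (τ / 3)) - (1 - τ) * Real.logb 2 (1 - τ) ∧
    condEnt (push τ (fun ω => (V2 ω, ω.2.1))) =
      -(τ * Real.logb 2 (τ / 3)) - (1 - τ) * Real.logb 2 (1 - τ) ∧
    (∀ a : ZMod 4, push τ V1 a = 1 / 4) ∧
    (∀ b : ZMod 4, push τ V2 b = 1 / 4) ∧
    (∀ a b : ZMod 4, push τ (fun ω => (V1 ω, V2 ω)) (a, b) =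
      push τ V1 a * push τ V2 b) ∧
    condEnt (push τ (fun ω => (xor4 (V1 ω) (V2 ω), Yout ω))) = 1 / 2 ∧
    min (condEnt (push τ (fun ω => (V1 ω, ω.1))))
        (condEnt (push τ (fun ω => (V2 ω, ω.2.1)))) -
      condEnt (push τ (fun ω => (xor4 (V1 ω) (V2 ω), Yout ω))) =
      -(τ * Real.logb 2 (τ / 3)) - (1 - τ) * Real.logb 2 (1 - τ) - 1 / 2 := by
  refine ⟨condEnt1 τ h0 h1, condEnt2 τ h0 h1, hV1 τ, hV2 τ, ?_, condEntXY τ, ?_⟩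
  · intro a b
    rw [hJ, hV1, hV2]
    norm_num
  · rw [condEnt1 τ h0 h1, condEnt2 τ h0 h1, condEntXY τ, min_self]

end Stmt18
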